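/- Consider full binary trees of height n with leaves labeled by ℂ, viewed as functions {0,1}^n → ℂ. For every n ≥ 1, the set S_n = { e_j : j ∈ {0,1}^n }, where e_j(j) = 1 and e_j(i) = 0 for i ≠ j (the set of all computational basis states), has cardinality 2^n, and there exists a nondeterministic top-down tree automaton with 2n+1 states and 3n+1 transitions whose language is exactly S_n. -/

import Mathlib

/-- A nondeterministic top-down tree automaton on full binary trees of height `n`
with leaves labeled by ℂ. Internal transitions `(q, k, q₀, q₁)` read the level
symbol `x_k` (levels `1,…,n`, determined by the depth of the node); leaf
transitions `(q, s)` read the leaf symbol `s ∈ {0,1}` (interpreted in ℂ). -/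
structure NTA (n : ℕ) where
  Q : Type
  [fin : Fintype Q]
  root : Finset Q
  Δi : Finset (Q × ℕ × Q × Q)
  Δl : Finset (Q × Bool)

/-- A tree (a function `{0,1}^n → ℂ` giving the leaf labels) is accepted if
there is a run `ρ` labeling each node (a path, i.e., a list of branch choices)
with a state, starting from a root state, consistent with the internal
transitions at internal nodes and with the leaf transitions at leaves. -/
def NTA.accepts {n : ℕ} (A : NTA n) (T : (Fin n → Bool) → ℂ) : Prop :=
  ∃ ρ : List Bool → A.Q,
    ρ [] ∈ A.root ∧
    (∀ l : List Bool, l.length < n →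
      (ρ l, l.length + 1, ρ (l ++ [false]), ρ (l ++ [true])) ∈ A.Δi) ∧
    (∀ l : List Bool, l.length = n →
      ∃ s : Bool, (ρ l, s) ∈ A.Δl ∧
        T (fun i => l.getD i.val false) = (if s then (1 : ℂ) else 0))

namespace BasisTA

def p (n k : ℕ) : Fin (2*n+1) := ⟨min k n, by omega⟩
def z (n k : ℕ) : Fin (2*n+1) := ⟨n + min k n, by omega⟩

lemma p_ne_z {n k k' : ℕ} (hn : 1 ≤ n) (hk' : 1 ≤ k') : p n k ≠ z n k' := by
  simp only [p, z, ne_eq, Fin.mk.injEq]; omega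

@[reducible] def TA (n : ℕ) : NTA n where
  Q := Fin (2*n+1)
  fin := inferInstance
  root := {p n 0}
  Δi := ((Finset.range n).image fun k => (p n k, k+1, p n (k+1), z n (k+1)))
      ∪ ((Finset.range n).image fun k => (p n k, k+1, z n (k+1), p n (k+1)))
      ∪ ((Finset.Ico 1 n).image fun k => (z n k, k+1, z n (k+1), z n (k+1)))
  Δl := {(p n n, true), (z n n, false)}

lemma mem_Δi {n : ℕ} {q a b : Fin (2*n+1)} {k : ℕ} :
    (q, k, a, b) ∈ (TA n).Δi ↔
      (∃ m, m < n ∧ q = p n m ∧ k = m + 1 ∧ a = p n (m+1) ∧ b = z n (m+1)) ∨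
      (∃ m, m < n ∧ q = p n m ∧ k = m + 1 ∧ a = z n (m+1) ∧ b = p n (m+1)) ∨
      (∃ m, 1 ≤ m ∧ m < n ∧ q = z n m ∧ k = m + 1 ∧ a = z n (m+1) ∧ b = z n (m+1)) := by
  simp only [TA, Finset.mem_union, Finset.mem_image, Finset.mem_range, Finset.mem_Ico,
    Prod.mk.injEq]
  constructor
  · rintro ((⟨m, hm, h1, h2, h3, h4⟩ | ⟨m, hm, h1, h2, h3, h4⟩) | ⟨m, hm, h1, h2, h3, h4⟩)
    · exact Or.inl ⟨m, hm, h1.symm, h2.symm, h3.symm, h4.symm⟩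
    · exact Or.inr (Or.inl ⟨m, hm, h1.symm, h2.symm, h3.symm, h4.symm⟩)
    · exact Or.inr (Or.inr ⟨m, hm.1, hm.2, h1.symm, h2.symm, h3.symm, h4.symm⟩)
  · rintro (⟨m, hm, h1, h2, h3, h4⟩ | ⟨m, hm, h1, h2, h3, h4⟩ | ⟨m, hm1, hm2, h1, h2, h3, h4⟩)
    · exact Or.inl (Or.inl ⟨m, hm, h1.symm, h2.symm, h3.symm, h4.symm⟩)
    · exact Or.inl (Or.inr ⟨m, hm, h1.symm, h2.symm, h3.symm, h4.symm⟩)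
    · exact Or.inr ⟨m, ⟨hm1, hm2⟩, h1.symm, h2.symm, h3.symm, h4.symm⟩

lemma card_Δi {n : ℕ} (hn : 1 ≤ n) : (TA n).Δi.card = 3 * n - 1 := by
  have hinj1 : Function.Injective (fun k : ℕ => (p n k, k+1, p n (k+1), z n (k+1))) := by
    intro a b h; have := congrArg (fun t => t.2.1) h; simpa using this
  have hinj2 : Function.Injective (fun k : ℕ => (p n k, k+1, z n (k+1), p n (k+1))) := by
    intro a b h; have := congrArg (fun t => t.2.1) h; simpa using this
  have hinj3 : Function.Injective (fun k : ℕ => (z n k, k+1, z n (k+1), z n (k+1))) := by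
    intro a b h; have := congrArg (fun t => t.2.1) h; simpa using this
  have hd1 : Disjoint ((Finset.range n).image fun k => (p n k, k+1, p n (k+1), z n (k+1)))
      ((Finset.range n).image fun k => (p n k, k+1, z n (k+1), p n (k+1))) := by
    rw [Finset.disjoint_left]
    rintro x hx hx'
    simp only [Finset.mem_image, Finset.mem_range] at hx hx'
    obtain ⟨a, ha, rfl⟩ := hx
    obtain ⟨b, hb, heq⟩ := hx'
    simp only [Prod.mk.injEq] at heq
    obtain ⟨e1, e2, e3, e4⟩ := heq
    have hba : b = a := by omega
    subst hba
    exact absurd e3.symm (p_ne_z hn (by omega))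
  have hd2 : Disjoint (((Finset.range n).image fun k => (p n k, k+1, p n (k+1), z n (k+1)))
        ∪ ((Finset.range n).image fun k => (p n k, k+1, z n (k+1), p n (k+1))))
      ((Finset.Ico 1 n).image fun k => (z n k, k+1, z n (k+1), z n (k+1))) := by
    rw [Finset.disjoint_left]
    rintro x hx hx'
    simp only [Finset.mem_union, Finset.mem_image, Finset.mem_range, Finset.mem_Ico] at hx hx'
    obtain ⟨b, hb, heq⟩ := hx'
    rcases hx with ⟨a, ha, rfl⟩ | ⟨a, ha, rfl⟩ <;>
    · simp only [Prod.mk.injEq] at heq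
      exact absurd heq.1.symm (p_ne_z hn hb.1)
  have hE : (TA n).Δi = ((Finset.range n).image fun k => (p n k, k+1, p n (k+1), z n (k+1)))
      ∪ ((Finset.range n).image fun k => (p n k, k+1, z n (k+1), p n (k+1)))
      ∪ ((Finset.Ico 1 n).image fun k => (z n k, k+1, z n (k+1), z n (k+1))) := rfl
  rw [hE, Finset.card_union_of_disjoint hd2, Finset.card_union_of_disjoint hd1,
    Finset.card_image_of_injective _ hinj1, Finset.card_image_of_injective _ hinj2,
    Finset.card_image_of_injective _ hinj3, Finset.card_range, Nat.card_Ico]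
  omega

lemma card_Δl {n : ℕ} (hn : 1 ≤ n) : (TA n).Δl.card = 2 := by
  show ({(p n n, true), (z n n, false)} : Finset (Fin (2*n+1) × Bool)).card = 2
  refine Finset.card_pair ?_
  intro h
  exact p_ne_z hn hn (congrArg Prod.fst h)

/-- the path followed by the `p` states in a run -/
def runPath {n : ℕ} (ρ : List Bool → Fin (2*n+1)) : ℕ → List Bool
  | 0 => []
  | k+1 => runPath ρ k ++ [decide (ρ (runPath ρ k ++ [true]) = p n (k+1))]

lemma runPath_length {n : ℕ} (ρ : List Bool → Fin (2*n+1)) (k : ℕ) :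
    (runPath ρ k).length = k := by
  induction k with
  | zero => rfl
  | succ k ih => simp [runPath, ih]

lemma run_on_path {n : ℕ} (hn : 1 ≤ n) (ρ : List Bool → Fin (2*n+1))
    (hroot : ρ [] = p n 0)
    (hint : ∀ l : List Bool, l.length < n →
      (ρ l, l.length + 1, ρ (l ++ [false]), ρ (l ++ [true])) ∈ (TA n).Δi) :
    ∀ k, k ≤ n → ρ (runPath ρ k) = p n k := by
  intro k
  induction k with
  | zero => intro _; exact hroot
  | succ k ih =>
    intro hk
    have hlen := runPath_length ρ k
    have ht := hint (runPath ρ k) (by omega)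
    rw [hlen, mem_Δi] at ht
    rcases ht with ⟨m, hm, h1, h2, h3, h4⟩ | ⟨m, hm, h1, h2, h3, h4⟩ |
        ⟨m, hm1, hm2, h1, h2, h3, h4⟩
    · have e : m = k := by omega
      rw [e] at h3 h4
      have hne' : ρ (runPath ρ k ++ [true]) ≠ p n (k+1) := by
        rw [h4]; exact fun h => p_ne_z hn (by omega) h.symm
      rw [runPath, decide_eq_false hne']
      exact h3
    · have e : m = k := by omega
      rw [e] at h3 h4
      rw [runPath, decide_eq_true h4]
      exact h4
    · exfalso
      rw [ih (by omega)] at h1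
      exact p_ne_z hn hm1 h1

lemma run_off_path {n : ℕ} (hn : 1 ≤ n) (ρ : List Bool → Fin (2*n+1))
    (hroot : ρ [] = p n 0)
    (hint : ∀ l : List Bool, l.length < n →
      (ρ l, l.length + 1, ρ (l ++ [false]), ρ (l ++ [true])) ∈ (TA n).Δi) :
    ∀ m, m ≤ n → ∀ l : List Bool, l.length = m → l ≠ runPath ρ m → ρ l = z n m := by
  intro m
  induction m with
  | zero =>
    intro _ l hl hne
    exact absurd (List.length_eq_zero_iff.mp hl) hne
  | succ m ih =>
    intro hm l hl hne
    obtain ⟨l', b, rfl⟩ : ∃ l' b, l = l' ++ [b] := by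
      rcases List.eq_nil_or_concat l with rfl | ⟨l', b, hc⟩
      · simp at hl
      · exact ⟨l', b, by simpa using hc⟩
    have hl' : l'.length = m := by simpa using hl
    by_cases hcase : l' = runPath ρ m
    · have hOn : ρ l' = p n m := by
        rw [hcase]; exact run_on_path hn ρ hroot hint m (by omega)
      have ht := hint l' (by omega)
      rw [hl', mem_Δi] at ht
      rcases ht with ⟨m', hm', h1, h2, h3, h4⟩ | ⟨m', hm', h1, h2, h3, h4⟩ |
          ⟨m', hm1', hm2', h1, h2, h3, h4⟩
      · have e : m' = m := by omega
        rw [e] at h3 h4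
        have hne' : ρ (l' ++ [true]) ≠ p n (m+1) := by
          rw [h4]; exact fun h => p_ne_z hn (by omega) h.symm
        have hstep : runPath ρ (m+1) = l' ++ [false] := by
          rw [runPath, ← hcase, decide_eq_false hne']
        cases b with
        | false => exact absurd hstep.symm hne
        | true => exact h4
      · have e : m' = m := by omega
        rw [e] at h3 h4
        have hstep : runPath ρ (m+1) = l' ++ [true] := by
          rw [runPath, ← hcase, decide_eq_true h4]
        cases b with
        | true => exact absurd hstep.symm hne
        | false => exact h3
      · exact absurd (hOn.symm.trans h1) (p_ne_z hn hm1')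
    · have hm1 : 1 ≤ m := by
        rcases Nat.eq_zero_or_pos m with rfl | h
        · exact absurd (List.length_eq_zero_iff.mp hl') hcase
        · exact h
      have hz := ih (by omega) l' hl' hcase
      have ht := hint l' (by omega)
      rw [hl', mem_Δi] at ht
      rcases ht with ⟨m', hm', h1, h2, h3, h4⟩ | ⟨m', hm', h1, h2, h3, h4⟩ |
          ⟨m', hm1', hm2', h1, h2, h3, h4⟩
      · exfalso; rw [hz] at h1; exact p_ne_z hn hm1 h1.symm
      · exfalso; rw [hz] at h1; exact p_ne_z hn hm1 h1.symm
      · have e : m' = m := by omega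
        rw [e] at h3 h4
        cases b
        · exact h3
        · exact h4

lemma getD_ofFn {n : ℕ} (i : Fin n → Bool) :
    (fun k : Fin n => (List.ofFn i).getD k.val false) = i := by
  funext k
  rw [List.getD_eq_getElem _ _ (by simp [k.isLt]), List.getElem_ofFn]

lemma ofFn_getD {n : ℕ} (l : List Bool) (hl : l.length = n) :
    List.ofFn (fun k : Fin n => l.getD k.val false) = l := by
  apply List.ext_getElem (by simp [hl])
  intro k h1 h2
  rw [List.getElem_ofFn]
  exact List.getD_eq_getElem _ _ h2

lemma take_ofFn_succ {n : ℕ} (j : Fin n → Bool) (m : ℕ) (hm : m < n) :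
    (List.ofFn j).take (m+1) = (List.ofFn j).take m ++ [j ⟨m, hm⟩] := by
  rw [List.take_succ]
  congr 1
  rw [List.getElem?_eq_getElem (by simpa using hm)]
  simp


end BasisTA

open BasisTA in
theorem basis_states_linear_TA (n : ℕ) (hn : 1 ≤ n) :
    Set.ncard {T : (Fin n → Bool) → ℂ |
        ∃ j : Fin n → Bool, T = fun i => if i = j then (1 : ℂ) else 0} = 2 ^ n ∧
    ∃ A : NTA n,
      @Fintype.card A.Q A.fin = 2 * n + 1 ∧
      A.Δi.card + A.Δl.card = 3 * n + 1 ∧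
      ∀ T : (Fin n → Bool) → ℂ,
        A.accepts T ↔ ∃ j : Fin n → Bool, T = fun i => if i = j then (1 : ℂ) else 0 := by

  constructor
  · have einj : Function.Injective
        (fun j : Fin n → Bool => fun i => if i = j then (1 : ℂ) else 0) := by
      intro a b h
      by_contra hne
      have h1 := congrFun h a
      simp only [if_pos rfl, if_neg hne] at h1
      exact one_ne_zero h1
    have hset : {T : (Fin n → Bool) → ℂ |
          ∃ j : Fin n → Bool, T = fun i => if i = j then (1 : ℂ) else 0}
        = Set.range (fun j : Fin n → Bool => fun i => if i = j then (1 : ℂ) else 0) := by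
      ext T
      simp only [Set.mem_setOf_eq, Set.mem_range, eq_comm]
    rw [hset, ← Nat.card_coe_set_eq, Nat.card_range_of_injective einj,
      Nat.card_eq_fintype_card]
    simp
  · refine ⟨TA n, ?_, ?_, ?_⟩
    · show Fintype.card (Fin (2 * n + 1)) = 2 * n + 1
      simp
    · rw [card_Δi hn, card_Δl hn]; omega
    · intro T
      constructor
      · rintro ⟨ρ, hroot, hint, hleaf⟩
        have hr : ρ [] = p n 0 := Finset.mem_singleton.mp hroot
        have hJlen : (runPath ρ n).length = n := runPath_length ρ n
        set J := runPath ρ n with hJdef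
        refine ⟨fun i => J.getD i.val false, ?_⟩
        have hTl : ∀ l : List Bool, l.length = n →
            T (fun k => l.getD k.val false) = if l = J then 1 else 0 := by
          intro l hl
          obtain ⟨s, hs, hT⟩ := hleaf l hl
          have hs' : (ρ l = p n n ∧ s = true) ∨ (ρ l = z n n ∧ s = false) := by
            have hmem : (ρ l, s) ∈
                ({(p n n, true), (z n n, false)} : Finset (Fin (2*n+1) × Bool)) := hs
            simp only [Finset.mem_insert, Finset.mem_singleton, Prod.mk.injEq] at hmem
            exact hmem
          by_cases hc : l = J
          · have hρ : ρ l = p n n := by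
              rw [hc]; exact run_on_path hn ρ hr hint n le_rfl
            rcases hs' with ⟨_, rfl⟩ | ⟨h1, _⟩
            · rw [if_pos hc]; simpa using hT
            · exact absurd (hρ.symm.trans h1) (p_ne_z hn hn)
          · have hρ : ρ l = z n n := run_off_path hn ρ hr hint n le_rfl l hl hc
            rcases hs' with ⟨h1, _⟩ | ⟨_, rfl⟩
            · exact absurd (h1.symm.trans hρ) (p_ne_z hn hn)
            · rw [if_neg hc]; simpa using hT
        funext i
        have hgi : (fun k : Fin n => (List.ofFn i).getD k.val false) = i := getD_ofFn i
        have hTi := hTl (List.ofFn i) (by simp)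
        rw [hgi] at hTi
        rw [hTi]
        by_cases hij : i = fun k : Fin n => J.getD k.val false
        · have hlJ : List.ofFn i = J := by rw [hij]; exact ofFn_getD J hJlen
          rw [if_pos hlJ, if_pos hij]
        · have hne2 : List.ofFn i ≠ J := fun h => hij (by rw [← hgi, h])
          rw [if_neg hne2, if_neg hij]
      · rintro ⟨j, rfl⟩
        have hJlen : (List.ofFn j).length = n := by simp
        set J := List.ofFn j with hJdef
        refine ⟨fun l => if l = J.take l.length then p n l.length else z n l.length,
          ?_, ?_, ?_⟩
        · show (if ([] : List Bool) = J.take ([] : List Bool).length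
              then p n ([] : List Bool).length else z n ([] : List Bool).length)
            ∈ (TA n).root
          rw [if_pos (by simp)]
          exact Finset.mem_singleton_self _
        · intro l hl
          rw [mem_Δi]
          have hlen0 : (l ++ [false]).length = l.length + 1 := by simp
          have hlen1 : (l ++ [true]).length = l.length + 1 := by simp
          by_cases hc : l = J.take l.length
          · have htake : J.take (l.length + 1) = l ++ [j ⟨l.length, hl⟩] := by
              rw [take_ofFn_succ j l.length hl, ← hc]
            have hch : ∀ b : Bool,
                (l ++ [b] = J.take (l.length + 1)) ↔ b = j ⟨l.length, hl⟩ := by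
              intro b
              rw [htake]
              constructor
              · intro h
                have h2 := List.append_inj' h rfl
                simpa using h2.2
              · rintro rfl; rfl
            cases hjv : j ⟨l.length, hl⟩ with
            | false =>
              refine Or.inl ⟨l.length, hl, if_pos hc, rfl, ?_, ?_⟩
              · show (if l ++ [false] = J.take (l ++ [false]).length
                    then p n (l ++ [false]).length else z n (l ++ [false]).length)
                  = p n (l.length + 1)
                rw [hlen0, if_pos ((hch false).mpr hjv.symm)]
              · show (if l ++ [true] = J.take (l ++ [true]).length
                    then p n (l ++ [true]).length else z n (l ++ [true]).length)
                  = z n (l.length + 1)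
                rw [hlen1, if_neg (fun h => by simpa [hjv] using (hch true).mp h)]
            | true =>
              refine Or.inr (Or.inl ⟨l.length, hl, if_pos hc, rfl, ?_, ?_⟩)
              · show (if l ++ [false] = J.take (l ++ [false]).length
                    then p n (l ++ [false]).length else z n (l ++ [false]).length)
                  = z n (l.length + 1)
                rw [hlen0, if_neg (fun h => by simpa [hjv] using (hch false).mp h)]
              · show (if l ++ [true] = J.take (l ++ [true]).length
                    then p n (l ++ [true]).length else z n (l ++ [true]).length)
                  = p n (l.length + 1)
                rw [hlen1, if_pos ((hch true).mpr hjv.symm)]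
          · have hm1 : 1 ≤ l.length := by
              rcases Nat.eq_zero_or_pos l.length with h0 | h
              · exact absurd (by rw [List.length_eq_zero_iff.mp h0]; simp) hc
              · exact h
            have hchild : ∀ b : Bool, l ++ [b] ≠ J.take (l.length + 1) := by
              intro b h
              rw [take_ofFn_succ j l.length hl] at h
              exact hc (List.append_inj' h rfl).1
            refine Or.inr (Or.inr ⟨l.length, hm1, hl, if_neg hc, rfl, ?_, ?_⟩)
            · show (if l ++ [false] = J.take (l ++ [false]).length
                  then p n (l ++ [false]).length else z n (l ++ [false]).length)
                = z n (l.length + 1)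
              rw [hlen0, if_neg (hchild false)]
            · show (if l ++ [true] = J.take (l ++ [true]).length
                  then p n (l ++ [true]).length else z n (l ++ [true]).length)
                = z n (l.length + 1)
              rw [hlen1, if_neg (hchild true)]
        · intro l hl
          have htakeJ : J.take n = J := by
            conv_lhs => rw [← hJlen]
            exact List.take_length
          by_cases hc : l = J
          · refine ⟨true, ?_, ?_⟩
            · show ((if l = J.take l.length then p n l.length else z n l.length), true)
                ∈ (TA n).Δl
              rw [if_pos (by rw [hl, htakeJ]; exact hc), hl]
              exact Finset.mem_insert_self _ _
            · have hgl : (fun i : Fin n => l.getD i.val false) = j := by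
                rw [hc]; exact getD_ofFn j
              show (if (fun i : Fin n => l.getD i.val false) = j then (1:ℂ) else 0)
                = if true then 1 else 0
              rw [if_pos hgl, if_pos rfl]
          · refine ⟨false, ?_, ?_⟩
            · show ((if l = J.take l.length then p n l.length else z n l.length), false)
                ∈ (TA n).Δl
              rw [if_neg (by rw [hl, htakeJ]; exact hc), hl]
              exact Finset.mem_insert_of_mem (Finset.mem_singleton_self _)
            · have hgl : (fun i : Fin n => l.getD i.val false) ≠ j := by
                intro h
                apply hc
                have h2 := ofFn_getD l hl
                rw [h] at h2
                exact h2.symm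
              show (if (fun i : Fin n => l.getD i.val false) = j then (1:ℂ) else 0)
                = if false then 1 else 0
              rw [if_neg hgl, if_neg (by simp)]
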